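/- Let d ≥ 1 and let K ⊆ [0,1]^d be convex and downward-closed with 0 ∈ K. Let L ≥ 1 be an integer, let v_1, …, v_L ∈ K, and define x_1 = 0 and x_{k+1} = x_k + (1/L)·v_k ⊙ (1 − x_k) for k = 1, …, L. Then x_k ∈ K for every k ∈ {1, …, L+1}. -/

import Mathlib

open MeasureTheory Finset

noncomputable section

/-- The unit cube `[0,1]^d` in `ℝ^d` (with Euclidean structure). -/
def cube (d : ℕ) : Set (EuclideanSpace ℝ (Fin d)) :=
  {x | ∀ i, x i ∈ Set.Icc (0 : ℝ) 1}

/-- Coordinatewise (Hadamard) product on `ℝ^d`. -/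
def had {d : ℕ} (x y : EuclideanSpace ℝ (Fin d)) : EuclideanSpace ℝ (Fin d) :=
  WithLp.toLp 2 (fun i => x i * y i)

/-- The all-ones vector in `ℝ^d`. -/
def onesV (d : ℕ) : EuclideanSpace ℝ (Fin d) := WithLp.toLp 2 (fun _ => 1)

/-- `K ⊆ ℝ^d` is downward closed (relative to the nonnegative orthant): together with any
`y ∈ K` it contains every `x` with `0 ≤ x ≤ y` coordinatewise. -/
def DownwardClosed (d : ℕ) (K : Set (EuclideanSpace ℝ (Fin d))) : Prop :=
  ∀ y ∈ K, ∀ x : EuclideanSpace ℝ (Fin d), (∀ i, 0 ≤ x i) → (∀ i, x i ≤ y i) → x ∈ K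

/-- `f` is continuous DR-submodular on the unit cube `[0,1]^d`. -/
def DRSubmodularOn (d : ℕ) (f : EuclideanSpace ℝ (Fin d) → ℝ) : Prop :=
  ∀ x y : EuclideanSpace ℝ (Fin d), x ∈ cube d → y ∈ cube d → (∀ i, x i ≤ y i) →
    ∀ (j : Fin d) (z : ℝ), 0 ≤ z →
      x + z • EuclideanSpace.single j (1 : ℝ) ∈ cube d →
      y + z • EuclideanSpace.single j (1 : ℝ) ∈ cube d →
      f (y + z • EuclideanSpace.single j (1 : ℝ)) - f y ≤
        f (x + z • EuclideanSpace.single j (1 : ℝ)) - f x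

/-- Lemma 4 of Zhang et al.: the Frank–Wolfe style iterates
`x_1 = 0`, `x_{k+1} = x_k + (1/L) v_k ⊙ (1 - x_k)` with `v_k ∈ K` stay in the convex
downward-closed set `K ⊆ [0,1]^d` containing `0`. -/
theorem frank_wolfe_iterates_feasible
    (d : ℕ) (hd : 1 ≤ d)
    (K : Set (EuclideanSpace ℝ (Fin d))) (hKcvx : Convex ℝ K) (hKX : K ⊆ cube d)
    (h0K : (0 : EuclideanSpace ℝ (Fin d)) ∈ K) (hdc : DownwardClosed d K)
    (L : ℕ) (hL : 1 ≤ L)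
    (v : ℕ → EuclideanSpace ℝ (Fin d)) (hv : ∀ k, 1 ≤ k → k ≤ L → v k ∈ K)
    (x : ℕ → EuclideanSpace ℝ (Fin d))
    (hx1 : x 1 = 0)
    (hrec : ∀ k, 1 ≤ k → k ≤ L →
      x (k + 1) = x k + (L : ℝ)⁻¹ • had (v k) (onesV d - x k)) :
    ∀ k, 1 ≤ k → k ≤ L + 1 → x k ∈ K := by
  have hLpos : (0:ℝ) < L := by exact_mod_cast hL
  -- scaling lemma: t • y ∈ K for t ∈ [0,1], y ∈ K
  have hscale : ∀ (t : ℝ), 0 ≤ t → t ≤ 1 → ∀ y ∈ K, t • y ∈ K := by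
    intro t ht0 ht1 y hy
    have := hKcvx h0K hy (by linarith : (0:ℝ) ≤ 1 - t) ht0 (by ring)
    simpa using this
  -- main claim by induction
  have main : ∀ k, 1 ≤ k → k ≤ L + 1 → ∃ y ∈ K, x k = (((k:ℝ) - 1)/L) • y := by
    intro k
    induction k with
    | zero => intro h; omega
    | succ n ih =>
      intro _ hn1
      rcases Nat.eq_or_lt_of_le (Nat.one_le_iff_ne_zero.mpr (by omega) : 1 ≤ n + 1) with h1 | h1
      · refine ⟨0, h0K, ?_⟩
        have : n = 0 := by omega
        subst this
        simp [hx1]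
      · have hn : 1 ≤ n := by omega
        have hnL : n ≤ L := by omega
        obtain ⟨y, hyK, hxy⟩ := ih hn (by omega)
        have htn0 : (0:ℝ) ≤ ((n:ℝ) - 1)/L := by
          apply div_nonneg _ hLpos.le
          have : (1:ℝ) ≤ (n:ℝ) := by exact_mod_cast hn
          linarith
        have htn1 : ((n:ℝ) - 1)/L ≤ 1 := by
          rw [div_le_one hLpos]
          have : (n:ℝ) ≤ (L:ℝ) := by exact_mod_cast hnL
          linarith
        have hxnK : x n ∈ K := hxy ▸ hscale _ htn0 htn1 y hyK
        have hxncube : x n ∈ cube d := hKX hxnK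
        have hvK : v n ∈ K := hv n hn hnL
        have hvcube : v n ∈ cube d := hKX hvK
        set u : EuclideanSpace ℝ (Fin d) := had (v n) (onesV d - x n) with hu
        have huK : u ∈ K := by
          apply hdc (v n) hvK
          · intro i
            have h1 := (hxncube i).2
            have h2 := (hvcube i).1
            have : u i = v n i * (1 - x n i) := by
              simp [hu, had, onesV, PiLp.sub_apply]
            rw [this]
            nlinarith
          · intro i
            have h1 := (hxncube i).1
            have h2 := (hvcube i).1
            have : u i = v n i * (1 - x n i) := by
              simp [hu, had, onesV, PiLp.sub_apply]
            rw [this]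
            nlinarith
        -- z = ((n-1)/n) • y + (1/n) • u ∈ K
        have hnpos : (0:ℝ) < n := by exact_mod_cast hn
        have hzK : (((n:ℝ) - 1)/n) • y + ((n:ℝ)⁻¹) • u ∈ K := by
          apply hKcvx hyK huK
          · apply div_nonneg _ hnpos.le
            have : (1:ℝ) ≤ (n:ℝ) := by exact_mod_cast hn
            linarith
          · positivity
          · field_simp
            ring
        refine ⟨_, hzK, ?_⟩
        rw [hrec n hn hnL, ← hu, hxy, smul_add, smul_smul, smul_smul]
        push_cast
        congr 1
        · congr 1
          field_simp
          ring
        · congr 1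
          field_simp
          ring
  intro k hk1 hk2
  obtain ⟨y, hyK, hxy⟩ := main k hk1 hk2
  rw [hxy]
  apply hscale _ _ _ y hyK
  · apply div_nonneg _ hLpos.le
    have : (1:ℝ) ≤ (k:ℝ) := by exact_mod_cast hk1
    linarith
  · rw [div_le_one hLpos]
    have : (k:ℝ) ≤ (L:ℝ) + 1 := by exact_mod_cast hk2
    linarith
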